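/- Let x be s-sparse, ‖y - Ax‖₂ ≤ ε, x̃ ∈ ℝ^N arbitrary, T̂ = supp(x̃, s), and x̂ defined by x̂_{T̂} = A_{T̂}† y, x̂_{T̂^c} = 0. If δ_{2s} < 1, then the ℓ₁ bound ‖x - x̂‖₁ ≤ √(2s/(1-δ_{2s}²)) ‖x - x̃‖₁ + (√(2s(1+δ_s))/(1-δ_{2s})) ε holds. -/

import Mathlib

set_option maxHeartbeats 1000000
set_option linter.unusedVariables false

open Finset

/-- ℓ2 norm of a vector. -/
noncomputable def l2 {n : ℕ} (v : Fin n → ℝ) : ℝ := Real.sqrt (∑ i, v i ^ 2)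

/-- ℓ1 norm of a vector. -/
noncomputable def l1 {n : ℕ} (v : Fin n → ℝ) : ℝ := ∑ i, |v i|

/-- number of nonzero entries (ℓ0 "norm"). -/
noncomputable def spars {n : ℕ} (v : Fin n → ℝ) : ℕ := Set.ncard {i | v i ≠ 0}

/-- restriction of a vector to an index set (zero off the set). -/
def restr {n : ℕ} (S : Finset (Fin n)) (v : Fin n → ℝ) : Fin n → ℝ :=
  fun i => if i ∈ S then v i else 0

lemma l2_sq {n : ℕ} (v : Fin n → ℝ) : l2 v ^ 2 = ∑ i, v i ^ 2 :=
  Real.sq_sqrt (by positivity)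

lemma l2_nonneg {n : ℕ} (v : Fin n → ℝ) : 0 ≤ l2 v := Real.sqrt_nonneg _

lemma l1_nonneg {n : ℕ} (v : Fin n → ℝ) : 0 ≤ l1 v :=
  Finset.sum_nonneg fun i _ => abs_nonneg _

lemma l2_le_l1 {n : ℕ} (v : Fin n → ℝ) : l2 v ≤ l1 v := by
  have h1 : ∑ i, v i ^ 2 ≤ (∑ i, |v i|) ^ 2 := by
    calc ∑ i, v i ^ 2 = ∑ i, |v i| ^ 2 := by simp [sq_abs]
      _ ≤ (∑ i, |v i|) ^ 2 :=
        Finset.sum_sq_le_sq_sum_of_nonneg (fun i _ => abs_nonneg _)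
  calc l2 v ≤ Real.sqrt ((∑ i, |v i|) ^ 2) := Real.sqrt_le_sqrt h1
    _ = l1 v := Real.sqrt_sq (l1_nonneg v)

lemma l1_le_sqrt_spars {n : ℕ} (v : Fin n → ℝ) (k : ℕ) (h : spars v ≤ k) :
    l1 v ≤ Real.sqrt k * l2 v := by
  classical
  set S := Finset.univ.filter (fun i => v i ≠ 0) with hS
  have hcard : S.card = spars v := by
    rw [spars, ← Set.ncard_coe_finset]; congr 1; ext i; simp [hS]
  have h1 : l1 v = ∑ i ∈ S, |v i| := by
    rw [l1]; symm; apply Finset.sum_subset (Finset.subset_univ _)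
    intro i _ hi
    simp only [hS, Finset.mem_filter, Finset.mem_univ, true_and, not_not] at hi
    simp [hi]
  have h2 : (∑ i ∈ S, |v i|) ^ 2 ≤ (S.card : ℝ) * ∑ i, v i ^ 2 := by
    have hcs := Finset.sum_mul_sq_le_sq_mul_sq S (fun _ => (1:ℝ)) (fun i => |v i|)
    simp only [one_mul, one_pow, sq_abs] at hcs
    calc (∑ i ∈ S, |v i|) ^ 2 ≤ (∑ _i ∈ S, (1:ℝ)) * ∑ i ∈ S, v i ^ 2 := hcs
      _ = (S.card : ℝ) * ∑ i ∈ S, v i ^ 2 := by simp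
      _ ≤ (S.card : ℝ) * ∑ i, v i ^ 2 :=
          mul_le_mul_of_nonneg_left (Finset.sum_le_sum_of_subset_of_nonneg (Finset.subset_univ _)
            (fun i _ _ => sq_nonneg _)) (by positivity)
  have h3 : (l1 v) ^ 2 ≤ (k : ℝ) * ∑ i, v i ^ 2 := by
    rw [h1]
    calc (∑ i ∈ S, |v i|) ^ 2 ≤ (S.card : ℝ) * ∑ i, v i ^ 2 := h2
      _ ≤ (k : ℝ) * ∑ i, v i ^ 2 := by
          have hsum : (0:ℝ) ≤ ∑ i, v i ^ 2 := by positivity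
          have hk : (S.card : ℝ) ≤ (k : ℝ) := by exact_mod_cast hcard ▸ h
          exact mul_le_mul_of_nonneg_right hk hsum
  calc l1 v = Real.sqrt ((l1 v) ^ 2) := (Real.sqrt_sq (l1_nonneg v)).symm
    _ ≤ Real.sqrt ((k : ℝ) * ∑ i, v i ^ 2) := Real.sqrt_le_sqrt h3
    _ = Real.sqrt k * l2 v := by rw [Real.sqrt_mul (by positivity), l2]

lemma le_of_sq_le_sq' {X Y : ℝ} (h : X ^ 2 ≤ Y ^ 2) (hY : 0 ≤ Y) : X ≤ Y := by
  nlinarith [sq_nonneg (X + Y), sq_nonneg (X - Y)]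

lemma core (δ U V β γ κ ρ ε : ℝ)
    (hδ0 : 0 ≤ δ) (hδ1 : δ < 1) (hU0 : 0 ≤ U) (hV0 : 0 ≤ V) (hε0 : 0 ≤ ε)
    (hβ1 : (1-δ)*U ≤ β) (hβ2 : β ≤ (1+δ)*U)
    (hκ : κ = -β - ρ) (hρsq : ρ^2 ≤ β*ε^2)
    (hq1 : ∀ t : ℝ, (1-δ)*(t^2*U+V) ≤ t^2*β + 2*t*κ + γ)
    (hq2 : ∀ t : ℝ, t^2*β + 2*t*κ + γ ≤ (1+δ)*(t^2*U+V)) :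
    Real.sqrt (U+V) ≤ Real.sqrt V/(Real.sqrt (1-δ)*Real.sqrt (1+δ)) + ε/Real.sqrt (1-δ) := by
  set a := Real.sqrt U with ha
  set b := Real.sqrt V with hb
  set c := Real.sqrt β with hc
  set dd := Real.sqrt (1-δ) with hdd
  set g := Real.sqrt (1+δ) with hg
  have hβ0 : 0 ≤ β := le_trans (mul_nonneg (by linarith) hU0) hβ1
  have ha2 : a^2 = U := Real.sq_sqrt hU0
  have hb2 : b^2 = V := Real.sq_sqrt hV0
  have hc2 : c^2 = β := Real.sq_sqrt hβ0
  have hdd2 : dd^2 = 1-δ := Real.sq_sqrt (by linarith)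
  have hg2 : g^2 = 1+δ := Real.sq_sqrt (by linarith)
  have ha0 : 0 ≤ a := Real.sqrt_nonneg _
  have hb0 : 0 ≤ b := Real.sqrt_nonneg _
  have hc0 : 0 ≤ c := Real.sqrt_nonneg _
  have hddpos : 0 < dd := Real.sqrt_pos.mpr (by linarith)
  have hgpos : 0 < g := Real.sqrt_pos.mpr (by linarith)
  have hP1 : κ^2 ≤ (β - (1-δ)*U) * (γ - (1-δ)*V) := by
    have hdisc := discrim_le_zero (a := β - (1-δ)*U) (b := 2*κ) (c := γ - (1-δ)*V)
      (fun t => by linarith [hq1 t])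
    rw [discrim] at hdisc; linarith [hdisc]
  have hP2 : κ^2 ≤ ((1+δ)*U - β) * ((1+δ)*V - γ) := by
    have hdisc := discrim_le_zero (a := (1+δ)*U - β) (b := -(2*κ)) (c := (1+δ)*V - γ)
      (fun t => by linarith [hq2 t])
    rw [discrim] at hdisc; linarith [hdisc]
  have hρlb : -(c*ε) ≤ ρ := by
    have h1 : (-ρ)^2 ≤ (c*ε)^2 := by rw [neg_pow, mul_pow, hc2]; simpa using hρsq
    have h2 : -ρ ≤ c*ε := le_of_sq_le_sq' h1 (mul_nonneg hc0 hε0)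
    linarith
  have hUkey : dd*g*a ≤ δ*b + g*ε := by
    rcases eq_or_lt_of_le hδ0 with heq | hpos
    · -- δ = 0
      have hβU : β = U := by
        have h1 := hβ1; have h2 := hβ2
        rw [← heq] at h1 h2; norm_num at h1 h2; linarith
      have hz : β - (1-δ)*U = 0 := by rw [← heq]; linarith
      rw [hz, zero_mul] at hP1
      have hκ0 : κ = 0 := by
        have hsq : κ^2 = 0 := le_antisymm hP1 (sq_nonneg κ)
        exact pow_eq_zero_iff two_ne_zero |>.mp hsq
      have hρβ : ρ = -β := by rw [hκ0] at hκ; linarith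
      rcases eq_or_lt_of_le hβ0 with hβz | hβpos
      · have hUz : U = 0 := by rw [← hβU, ← hβz]
        have haz : a = 0 := by rw [ha, hUz, Real.sqrt_zero]
        rw [haz, mul_zero]
        have n1 := mul_nonneg hδ0 hb0
        have n2 := mul_nonneg hgpos.le hε0
        linarith
      · have hβε : β ≤ ε^2 := by
          have hββ : β*β ≤ β*ε^2 := by
            calc β*β = ρ^2 := by rw [hρβ]; ring
              _ ≤ β*ε^2 := hρsq
          exact le_of_mul_le_mul_left hββ hβpos
        have haε : a ≤ ε := by
          have : a^2 ≤ ε^2 := by rw [ha2]; nlinarith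
          exact le_of_sq_le_sq' this hε0
        have hdd1 : dd = 1 := by rw [hdd, ← heq]; norm_num
        rw [hdd1, ← heq]
        linarith [mul_le_mul_of_nonneg_left haε hgpos.le, hb0]
    · -- δ > 0
      have hb1' : 0 ≤ β - (1-δ)*U := by linarith
      have hb2' : 0 ≤ (1+δ)*U - β := by linarith
      have step1 : 2*δ*U*κ^2 ≤ 2*δ*V*((β-(1-δ)*U)*((1+δ)*U-β)) := by
        linarith [mul_le_mul_of_nonneg_left hP1 hb2', mul_le_mul_of_nonneg_left hP2 hb1']
      have step2 : U*κ^2 ≤ V*((β-(1-δ)*U)*((1+δ)*U-β)) := by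
        have h2δ : 0 < 2*δ := by linarith
        have hs : 2*δ*(U*κ^2) ≤ 2*δ*(V*((β-(1-δ)*U)*((1+δ)*U-β))) := by linarith [step1]
        exact le_of_mul_le_mul_left hs h2δ
      have m1 : (1-δ^2)*((β-(1-δ)*U)*((1+δ)*U-β)) ≤ δ^2*β^2 := by
        linarith [sq_nonneg (β - (1-δ^2)*U)]
      have hδsq : (0:ℝ) ≤ 1-δ^2 := by
        linarith [mul_nonneg (by linarith : (0:ℝ) ≤ 1-δ) (by linarith : (0:ℝ) ≤ 1+δ)]
      have step3 : (1-δ^2)*(U*κ^2) ≤ δ^2*β^2*V := by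
        linarith [mul_le_mul_of_nonneg_left step2 hδsq, mul_le_mul_of_nonneg_left m1 hV0]
      have hκsq : κ^2 = (β+ρ)^2 := by rw [hκ]; ring
      have step3' : (1-δ^2)*(U*(β+ρ)^2) ≤ δ^2*β^2*V := by rw [← hκsq]; exact step3
      have h5 : dd*g*a*(β+ρ) ≤ δ*β*b := by
        apply le_of_sq_le_sq' _ (mul_nonneg (mul_nonneg hδ0 hβ0) hb0)
        have e1 : (dd*g*a*(β+ρ))^2 = (1-δ^2)*(U*(β+ρ)^2) := by
          have e0 : (dd*g*a*(β+ρ))^2 = dd^2*g^2*a^2*(β+ρ)^2 := by ring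
          rw [e0, hdd2, hg2, ha2]; ring
        have e2 : (δ*β*b)^2 = δ^2*β^2*V := by
          have e0 : (δ*β*b)^2 = δ^2*β^2*b^2 := by ring
          rw [e0, hb2]
        rw [e1, e2]; exact step3'
      have hdac : dd*a ≤ c := by
        apply le_of_sq_le_sq' _ hc0
        rw [mul_pow, hdd2, ha2, hc2]; exact hβ1
      have h6 : dd*g*a*β ≤ δ*β*b + g*β*ε := by
        have hdga0 : 0 ≤ dd*g*a := by positivity
        have h61 : dd*g*a*(β - c*ε) ≤ dd*g*a*(β+ρ) :=
          mul_le_mul_of_nonneg_left (by linarith) hdga0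
        have h62 : dd*g*a*(c*ε) ≤ g*β*ε := by
          have hmm : (dd*a)*(g*c*ε) ≤ c*(g*c*ε) :=
            mul_le_mul_of_nonneg_right hdac (by positivity)
          calc dd*g*a*(c*ε) = (dd*a)*(g*c*ε) := by ring
            _ ≤ c*(g*c*ε) := hmm
            _ = g*c^2*ε := by ring
            _ = g*β*ε := by rw [hc2]
        linarith [h61, h5, h62]
      rcases eq_or_lt_of_le hβ0 with hβz | hβpos
      · have hUz : U = 0 := by
          by_contra hne
          have hUpos : 0 < U := lt_of_le_of_ne hU0 (Ne.symm hne)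
          have hmp : 0 < (1-δ)*U := mul_pos (by linarith) hUpos
          linarith
        have haz : a = 0 := by rw [ha, hUz, Real.sqrt_zero]
        rw [haz, mul_zero]
        have n1 := mul_nonneg hδ0 hb0
        have n2 := mul_nonneg hgpos.le hε0
        linarith
      · have h7 : (dd*g*a)*β ≤ (δ*b + g*ε)*β := by linarith [h6]
        exact le_of_mul_le_mul_right h7 hβpos
  -- assemble
  have hQpos : 0 < dd*g := mul_pos hddpos hgpos
  have H1 : a ≤ δ*(b/(dd*g)) + ε/dd := by
    have h1 : a ≤ (δ*b + g*ε)/(dd*g) := (le_div_iff₀ hQpos).mpr (by linarith [hUkey])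
    have h2 : (δ*b + g*ε)/(dd*g) = δ*(b/(dd*g)) + ε/dd := by
      field_simp
    rw [h2] at h1; exact h1
  apply le_of_sq_le_sq' _ (by positivity : (0:ℝ) ≤ b/(dd*g) + ε/dd)
  rw [Real.sq_sqrt (by linarith : (0:ℝ) ≤ U + V)]
  have hQ0 : 0 ≤ b/(dd*g) := div_nonneg hb0 hQpos.le
  have hr0 : 0 ≤ ε/dd := div_nonneg hε0 hddpos.le
  have hU' : U ≤ (δ*(b/(dd*g)) + ε/dd)^2 := by
    rw [← ha2]; exact pow_le_pow_left₀ ha0 H1 2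
  have hbsq : b^2 = (b/(dd*g))^2*(1-δ^2) := by
    have hQb : b = (b/(dd*g))*(dd*g) := (div_mul_cancel₀ b (ne_of_gt hQpos)).symm
    have hdg2 : (dd*g)^2 = 1-δ^2 := by rw [mul_pow, hdd2, hg2]; ring
    calc b^2 = (b/(dd*g))^2*(dd*g)^2 := by rw [← mul_pow, ← hQb]
      _ = (b/(dd*g))^2*(1-δ^2) := by rw [hdg2]
  have hVb : V = b^2 := hb2.symm
  have hlast : (0:ℝ) ≤ (1-δ)*((b/(dd*g))*(ε/dd)) :=
    mul_nonneg (by linarith) (mul_nonneg hQ0 hr0)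
  linarith [hU', hbsq, hVb, hlast]

lemma prune {N : ℕ} (x xt : Fin N → ℝ) (Th : Finset (Fin N)) (s : ℕ)
    (hx : spars x ≤ s) (hThcard : Th.card = s)
    (hTh : ∀ i ∈ Th, ∀ j ∉ Th, |xt j| ≤ |xt i|) :
    l1 (fun i => if i ∈ Th then 0 else x i) ≤ l1 (x - xt) := by
  classical
  set S := Finset.univ.filter (fun i => x i ≠ 0) with hS
  have hScard : S.card ≤ s := by
    have hsp : spars x = S.card := by
      rw [spars, ← Set.ncard_coe_finset]; congr 1; ext i; simp [hS]
    omega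
  have h1 : l1 (fun i => if i ∈ Th then 0 else x i) = ∑ i ∈ S \ Th, |x i| := by
    rw [l1]
    rw [← Finset.sum_subset (Finset.subset_univ (S \ Th)) (f := fun i => |if i ∈ Th then 0 else x i|)]
    · apply Finset.sum_congr rfl
      intro i hi
      have hiT : i ∉ Th := (Finset.mem_sdiff.mp hi).2
      simp [hiT]
    · intro i _ hi
      by_cases hiT : i ∈ Th
      · simp [hiT]
      · have hxi : x i = 0 := by
          by_contra hne
          exact hi (Finset.mem_sdiff.mpr ⟨by simp [hS, hne], hiT⟩)
        simp [hiT, hxi]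
  have h2 : ∑ i ∈ S \ Th, |x i| ≤ (∑ i ∈ S \ Th, |x i - xt i|) + ∑ i ∈ S \ Th, |xt i| := by
    rw [← Finset.sum_add_distrib]
    apply Finset.sum_le_sum
    intro i _
    calc |x i| = |(x i - xt i) + xt i| := by ring_nf
      _ ≤ |x i - xt i| + |xt i| := abs_add_le _ _
  have h3 : ∑ i ∈ S \ Th, |xt i| ≤ ∑ j ∈ Th \ S, |xt j| := by
    rcases Finset.eq_empty_or_nonempty (S \ Th) with he | hne
    · rw [he]; simp
      exact Finset.sum_nonneg fun j _ => abs_nonneg _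
    · have hcards : (S \ Th).card ≤ (Th \ S).card := by
        have c1 := Finset.card_sdiff_add_card_inter S Th
        have c2 := Finset.card_sdiff_add_card_inter Th S
        rw [Finset.inter_comm] at c2
        omega
      have hTS : (Th \ S).Nonempty := by
        have := Finset.card_pos.mpr hne
        exact Finset.card_pos.mp (lt_of_lt_of_le this hcards)
      obtain ⟨j0, hj0mem, hj0min⟩ := Finset.exists_min_image (Th \ S) (fun j => |xt j|) hTS
      have hj0Th : j0 ∈ Th := (Finset.mem_sdiff.mp hj0mem).1
      calc ∑ i ∈ S \ Th, |xt i| ≤ ∑ _i ∈ S \ Th, |xt j0| := by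
            apply Finset.sum_le_sum
            intro i hi
            exact hTh j0 hj0Th i (Finset.mem_sdiff.mp hi).2
        _ = ((S \ Th).card : ℝ) * |xt j0| := by rw [Finset.sum_const, nsmul_eq_mul]
        _ ≤ ((Th \ S).card : ℝ) * |xt j0| :=
            mul_le_mul_of_nonneg_right (by exact_mod_cast hcards) (abs_nonneg _)
        _ = ∑ _j ∈ Th \ S, |xt j0| := by rw [Finset.sum_const, nsmul_eq_mul]
        _ ≤ ∑ j ∈ Th \ S, |xt j| := Finset.sum_le_sum fun j hj => hj0min j hj
  have h4 : ∑ j ∈ Th \ S, |xt j| = ∑ j ∈ Th \ S, |x j - xt j| := by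
    apply Finset.sum_congr rfl
    intro j hj
    have hxj : x j = 0 := by
      have := (Finset.mem_sdiff.mp hj).2
      simp [hS] at this
      exact this
    rw [hxj, zero_sub, abs_neg]
  have h5 : (∑ i ∈ S \ Th, |x i - xt i|) + ∑ j ∈ Th \ S, |x j - xt j| ≤ l1 (x - xt) := by
    have hdisj : Disjoint (S \ Th) (Th \ S) := by
      rw [Finset.disjoint_left]
      intro a ha hb
      exact (Finset.mem_sdiff.mp hb).2 ((Finset.mem_sdiff.mp ha).1)
    rw [← Finset.sum_union hdisj]
    rw [l1]
    have : ∀ i, |x i - xt i| = |(x - xt) i| := fun i => rfl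
    apply le_trans (le_of_eq (Finset.sum_congr rfl fun i _ => this i))
    exact Finset.sum_le_sum_of_subset_of_nonneg (Finset.subset_univ _)
      (fun i _ _ => abs_nonneg _)
  linarith

theorem stmt16 {M N : ℕ} (A : Matrix (Fin M) (Fin N) ℝ)
    (s : ℕ) (x : Fin N → ℝ) (hx : spars x ≤ s)
    (y : Fin M → ℝ) (ε : ℝ) (hy : l2 (y - A.mulVec x) ≤ ε)
    (xt : Fin N → ℝ)
    (Th : Finset (Fin N)) (hThcard : Th.card = s)
    (hTh : ∀ i ∈ Th, ∀ j ∉ Th, |xt j| ≤ |xt i|)   -- T̂ = indices of the s largest magnitudes of x̃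
    (xh : Fin N → ℝ)
    -- x̂ is supported on T̂ and x̂_{T̂} = A_{T̂}† y, characterized by the normal equations
    (hxhsupp : ∀ i ∉ Th, xh i = 0)
    (hxhls : ∀ i ∈ Th, ∑ j, A j i * (A.mulVec xh j - y j) = 0)
    (δ2s δs : ℝ) (hδ2s : δ2s < 1)
    (hRIP2s : ∀ v : Fin N → ℝ, spars v ≤ 2 * s →
      (1 - δ2s) * (l2 v) ^ 2 ≤ (l2 (A.mulVec v)) ^ 2 ∧
      (l2 (A.mulVec v)) ^ 2 ≤ (1 + δ2s) * (l2 v) ^ 2)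
    (hRIPs : ∀ v : Fin N → ℝ, spars v ≤ s →
      (1 - δs) * (l2 v) ^ 2 ≤ (l2 (A.mulVec v)) ^ 2 ∧
      (l2 (A.mulVec v)) ^ 2 ≤ (1 + δs) * (l2 v) ^ 2) :
    l1 (x - xh) ≤ Real.sqrt (2 * s / (1 - δ2s ^ 2)) * l1 (x - xt) + (Real.sqrt (2 * s * (1 + δs)) / (1 - δ2s)) * ε := by
  classical
  have hε0 : 0 ≤ ε := le_trans (l2_nonneg _) hy
  have h1δ : (0:ℝ) < 1 - δ2s := by linarith
  by_cases hs0 : s = 0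
  · have hTh0 : Th = ∅ := Finset.card_eq_zero.mp (by rw [hThcard, hs0])
    have hx0 : ∀ i, x i = 0 := by
      intro i
      by_contra hxi
      have h0 : spars x = 0 := Nat.le_zero.mp (hs0 ▸ hx)
      have hemp : {i | x i ≠ 0} = ∅ := (Set.ncard_eq_zero (Set.toFinite _)).mp h0
      exact absurd hemp (Set.nonempty_iff_ne_empty.mp ⟨i, hxi⟩)
    have hxh0 : ∀ i, xh i = 0 := fun i => hxhsupp i (by simp [hTh0])
    have hL : l1 (x - xh) = 0 := by
      rw [l1]; apply Finset.sum_eq_zero; intro i _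
      simp [Pi.sub_apply, hx0 i, hxh0 i]
    rw [hL, hs0]
    norm_num
  by_cases hN0 : N = 0
  · subst hN0
    have hL : l1 (x - xh) = 0 := by rw [l1]; simp
    have hL2 : l1 (x - xt) = 0 := by rw [l1]; simp
    rw [hL, hL2, mul_zero, zero_add]
    exact mul_nonneg (div_nonneg (Real.sqrt_nonneg _) h1δ.le) hε0
  -- main case
  have hs1 : 1 ≤ s := Nat.one_le_iff_ne_zero.mpr hs0
  have hN1 : 0 < N := Nat.pos_of_ne_zero hN0
  obtain ⟨hδ0, hδsl⟩ : 0 ≤ δ2s ∧ 1 - δ2s ≤ 1 + δs := by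
    set i0 : Fin N := ⟨0, hN1⟩
    set e0 : Fin N → ℝ := fun i => if i = i0 then 1 else 0 with he0
    have he0spars : spars e0 = 1 := by
      rw [spars]
      have hset : {i | e0 i ≠ 0} = {i0} := by
        ext i; by_cases hii : i = i0 <;> simp [he0, hii]
      rw [hset, Set.ncard_singleton]
    have he0l2 : l2 e0 ^ 2 = 1 := by
      rw [l2_sq]
      have hterm : ∀ i, e0 i ^ 2 = if i = i0 then (1:ℝ) else 0 := by
        intro i; by_cases hii : i = i0 <;> simp [he0, hii]
      rw [Finset.sum_congr rfl (fun i _ => hterm i), Finset.sum_ite_eq']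
      simp
    obtain ⟨hr1, hr2⟩ := hRIP2s e0 (by rw [he0spars]; omega)
    obtain ⟨_, hr4⟩ := hRIPs e0 (by rw [he0spars]; omega)
    rw [he0l2] at hr1 hr2 hr4
    constructor <;> linarith
  -- noise bound
  have hevsq : ∑ j, (y - A.mulVec x) j ^ 2 ≤ ε ^ 2 := by
    have h2 : l2 (y - A.mulVec x) ^ 2 ≤ ε ^ 2 := by
      have := pow_le_pow_left₀ (l2_nonneg (y - A.mulVec x)) hy 2
      exact this
    rw [l2_sq] at h2; exact h2
  set d : Fin N → ℝ := x - xh with hd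
  set u : Fin N → ℝ := restr Th d with hu
  set v : Fin N → ℝ := fun i => if i ∈ Th then 0 else d i with hv
  have hdi : ∀ i, d i = x i - xh i := fun i => rfl
  have hduv : ∀ i, d i = u i + v i := by
    intro i; by_cases hi : i ∈ Th <;> simp [hu, hv, restr, hi]
  have huv0 : ∀ i, u i * v i = 0 := by
    intro i; by_cases hi : i ∈ Th <;> simp [hu, hv, restr, hi]
  have hvx : ∀ i, i ∉ Th → v i = x i := by
    intro i hi; simp [hv, hi, hdi i, hxhsupp i hi]
  have hsparsub : ∀ (w : Fin N → ℝ), (∀ i, i ∉ Th → x i = 0 → w i = 0) → spars w ≤ 2 * s := by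
    intro w hw
    have hsub : {i | w i ≠ 0} ⊆ (↑Th ∪ {i | x i ≠ 0} : Set (Fin N)) := by
      intro i hi
      by_cases hiT : i ∈ Th
      · exact Or.inl hiT
      · right
        intro hxi
        exact hi (hw i hiT hxi)
    calc spars w ≤ (↑Th ∪ {i | x i ≠ 0} : Set (Fin N)).ncard :=
          Set.ncard_le_ncard hsub (Set.toFinite _)
      _ ≤ (↑Th : Set (Fin N)).ncard + {i | x i ≠ 0}.ncard := Set.ncard_union_le _ _
      _ ≤ s + s := by
          rw [Set.ncard_coe_finset, hThcard]
          exact Nat.add_le_add_left hx s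
      _ = 2 * s := by omega
  have hrip2 : ∀ w : Fin N → ℝ, spars w ≤ 2 * s →
      (1 - δ2s) * (∑ i, w i ^ 2) ≤ (∑ j, (A.mulVec w j) ^ 2) ∧
      (∑ j, (A.mulVec w j) ^ 2) ≤ (1 + δ2s) * (∑ i, w i ^ 2) := by
    intro w hw
    have := hRIP2s w hw
    rwa [l2_sq, l2_sq] at this
  -- normal equations
  have hswap : ∀ (z : Fin N → ℝ) (w : Fin M → ℝ),
      ∑ j, A.mulVec z j * w j = ∑ i, z i * (∑ j, A j i * w j) := by
    intro z w
    simp only [Matrix.mulVec, dotProduct, Finset.sum_mul]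
    rw [Finset.sum_comm]
    exact Finset.sum_congr rfl fun i _ => by
      rw [Finset.mul_sum]
      exact Finset.sum_congr rfl fun j _ => by ring
  have hne : ∑ j, A.mulVec u j * (A.mulVec xh j - y j) = 0 := by
    rw [hswap]
    apply Finset.sum_eq_zero
    intro i _
    by_cases hiT : i ∈ Th
    · rw [hxhls i hiT, mul_zero]
    · have hui : u i = 0 := by simp [hu, restr, hiT]
      rw [hui, zero_mul]
  have hAdj : ∀ j, A.mulVec xh j - y j
      = -(A.mulVec u j + A.mulVec v j + (y - A.mulVec x) j) := by
    intro j
    have huvd : u + v = d := funext fun i => (hduv i).symm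
    have h2 : A.mulVec d j = A.mulVec u j + A.mulVec v j := by
      rw [← huvd, Matrix.mulVec_add]; rfl
    have h3 : A.mulVec d j = A.mulVec x j - A.mulVec xh j := by
      rw [hd, Matrix.mulVec_sub]; rfl
    have h4 : (y - A.mulVec x) j = y j - A.mulVec x j := rfl
    rw [← h2, h3, h4]; ring
  have hκeq : (∑ j, A.mulVec u j * A.mulVec v j)
      = -(∑ j, (A.mulVec u j) ^ 2) - (∑ j, A.mulVec u j * (y - A.mulVec x) j) := by
    have expand : ∀ j, A.mulVec u j * (A.mulVec xh j - y j)
        = -((A.mulVec u j) ^ 2 + A.mulVec u j * A.mulVec v j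
            + A.mulVec u j * (y - A.mulVec x) j) := by
      intro j; rw [hAdj j]; ring
    have h0 := hne
    rw [Finset.sum_congr rfl (fun j _ => expand j)] at h0
    rw [Finset.sum_neg_distrib, Finset.sum_add_distrib, Finset.sum_add_distrib] at h0
    linarith
  -- quadratic inequalities
  have hsw : ∀ t : ℝ, spars (fun i => t * u i + v i) ≤ 2 * s := by
    intro t
    apply hsparsub
    intro i hiT hxi
    have h1 : u i = 0 := by simp [hu, restr, hiT]
    have h2 : v i = 0 := by rw [hvx i hiT]; exact hxi
    rw [h1, h2]; ring
  have hq : ∀ t : ℝ,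
      (1 - δ2s) * (t ^ 2 * (∑ i, u i ^ 2) + (∑ i, v i ^ 2))
        ≤ t ^ 2 * (∑ j, (A.mulVec u j) ^ 2) + 2 * t * (∑ j, A.mulVec u j * A.mulVec v j)
          + (∑ j, (A.mulVec v j) ^ 2) ∧
      t ^ 2 * (∑ j, (A.mulVec u j) ^ 2) + 2 * t * (∑ j, A.mulVec u j * A.mulVec v j)
          + (∑ j, (A.mulVec v j) ^ 2)
        ≤ (1 + δ2s) * (t ^ 2 * (∑ i, u i ^ 2) + (∑ i, v i ^ 2)) := by
    intro t
    obtain ⟨hl, hr⟩ := hrip2 (fun i => t * u i + v i) (hsw t)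
    have hns : (∑ i, (t * u i + v i) ^ 2)
        = t ^ 2 * (∑ i, u i ^ 2) + (∑ i, v i ^ 2) := by
      calc ∑ i, (t * u i + v i) ^ 2
          = ∑ i, (t ^ 2 * u i ^ 2 + v i ^ 2 + (2 * t) * (u i * v i)) :=
            Finset.sum_congr rfl (fun i _ => by ring)
        _ = t ^ 2 * (∑ i, u i ^ 2) + (∑ i, v i ^ 2) + (2 * t) * (∑ i, u i * v i) := by
            rw [Finset.sum_add_distrib, Finset.sum_add_distrib, Finset.mul_sum, Finset.mul_sum]
        _ = t ^ 2 * (∑ i, u i ^ 2) + (∑ i, v i ^ 2) := by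
            rw [Finset.sum_eq_zero (fun i _ => huv0 i), mul_zero, add_zero]
    have hwuv : (fun i => t * u i + v i) = t • u + v := by
      funext i; simp
    have hAs : (∑ j, (A.mulVec (fun i => t * u i + v i) j) ^ 2)
        = t ^ 2 * (∑ j, (A.mulVec u j) ^ 2)
          + 2 * t * (∑ j, A.mulVec u j * A.mulVec v j) + (∑ j, (A.mulVec v j) ^ 2) := by
      rw [hwuv, Matrix.mulVec_add, Matrix.mulVec_smul]
      calc ∑ j, ((t • A.mulVec u + A.mulVec v) j) ^ 2
          = ∑ j, (t * A.mulVec u j + A.mulVec v j) ^ 2 := by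
            apply Finset.sum_congr rfl; intro j _; simp
        _ = ∑ j, (t ^ 2 * (A.mulVec u j) ^ 2 + (2 * t) * (A.mulVec u j * A.mulVec v j)
              + (A.mulVec v j) ^ 2) := Finset.sum_congr rfl (fun j _ => by ring)
        _ = _ := by
            rw [Finset.sum_add_distrib, Finset.sum_add_distrib, Finset.mul_sum, Finset.mul_sum]
    rw [hns, hAs] at hl hr
    exact ⟨hl, hr⟩
  -- Cauchy-Schwarz for the noise term
  have hρsq : (∑ j, A.mulVec u j * (y - A.mulVec x) j) ^ 2
      ≤ (∑ j, (A.mulVec u j) ^ 2) * ε ^ 2 := by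
    have hcs := Finset.sum_mul_sq_le_sq_mul_sq Finset.univ
      (fun j => A.mulVec u j) (fun j => (y - A.mulVec x) j)
    calc (∑ j, A.mulVec u j * (y - A.mulVec x) j) ^ 2
        ≤ (∑ j, (A.mulVec u j) ^ 2) * (∑ j, (y - A.mulVec x) j ^ 2) := hcs
      _ ≤ (∑ j, (A.mulVec u j) ^ 2) * ε ^ 2 :=
          mul_le_mul_of_nonneg_left hevsq (by positivity)
  have hsu : spars u ≤ 2 * s := by
    apply hsparsub
    intro i hiT _
    simp [hu, restr, hiT]
  obtain ⟨hβ1, hβ2⟩ := hrip2 u hsu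
  have hU0 : (0:ℝ) ≤ ∑ i, u i ^ 2 := by positivity
  have hV0 : (0:ℝ) ≤ ∑ i, v i ^ 2 := by positivity
  have hcore := core δ2s (∑ i, u i ^ 2) (∑ i, v i ^ 2)
    (∑ j, (A.mulVec u j) ^ 2) (∑ j, (A.mulVec v j) ^ 2)
    (∑ j, A.mulVec u j * A.mulVec v j) (∑ j, A.mulVec u j * (y - A.mulVec x) j) ε
    hδ0 hδ2s hU0 hV0 hε0 hβ1 hβ2 hκeq hρsq (fun t => (hq t).1) (fun t => (hq t).2)
  -- express l2 d
  have hl2d : l2 d = Real.sqrt ((∑ i, u i ^ 2) + (∑ i, v i ^ 2)) := by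
    rw [l2]
    congr 1
    calc ∑ i, d i ^ 2 = ∑ i, (u i ^ 2 + v i ^ 2 + 2 * (u i * v i)) :=
          Finset.sum_congr rfl (fun i _ => by rw [hduv i]; ring)
      _ = (∑ i, u i ^ 2) + (∑ i, v i ^ 2) + 2 * (∑ i, u i * v i) := by
          rw [Finset.sum_add_distrib, Finset.sum_add_distrib, Finset.mul_sum]
      _ = (∑ i, u i ^ 2) + (∑ i, v i ^ 2) := by
          rw [Finset.sum_eq_zero (fun i _ => huv0 i), mul_zero, add_zero]
  have hl2v : Real.sqrt (∑ i, v i ^ 2) = l2 v := by rw [l2]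
  have hstep2 : l2 d ≤ l2 v / (Real.sqrt (1 - δ2s) * Real.sqrt (1 + δ2s))
      + ε / Real.sqrt (1 - δ2s) := by
    rw [hl2d, ← hl2v]
    exact hcore
  -- l1-l2 step
  have hsd : spars d ≤ 2 * s := by
    apply hsparsub
    intro i hiT hxi
    rw [hdi i, hxi, hxhsupp i hiT]; ring
  have hstep1 : l1 d ≤ Real.sqrt (2 * (s:ℝ)) * l2 d := by
    have hlem := l1_le_sqrt_spars d (2 * s) hsd
    rwa [show ((2 * s : ℕ) : ℝ) = 2 * (s:ℝ) by push_cast; ring] at hlem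
  -- pruning
  have hveq : v = fun i => if i ∈ Th then 0 else x i := by
    funext i
    by_cases hi : i ∈ Th
    · simp [hv, hi]
    · simp [hv, hi, hdi i, hxhsupp i hi]
  have hprune : l1 v ≤ l1 (x - xt) := by
    rw [hveq]
    exact prune x xt Th s hx hThcard hTh
  have hvb : l2 v ≤ l1 (x - xt) := le_trans (l2_le_l1 v) hprune
  -- coefficient computations
  have hc1 : Real.sqrt (2 * (s:ℝ)) / (Real.sqrt (1 - δ2s) * Real.sqrt (1 + δ2s))
      = Real.sqrt (2 * (s:ℝ) / (1 - δ2s ^ 2)) := by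
    rw [Real.sqrt_div (by positivity : (0:ℝ) ≤ 2 * (s:ℝ)) (1 - δ2s ^ 2)]
    rw [show (1:ℝ) - δ2s ^ 2 = (1 - δ2s) * (1 + δ2s) by ring]
    rw [Real.sqrt_mul h1δ.le]
  have hddpos : 0 < Real.sqrt (1 - δ2s) := Real.sqrt_pos.mpr h1δ
  have hdd2 : Real.sqrt (1 - δ2s) ^ 2 = 1 - δ2s := Real.sq_sqrt h1δ.le
  have hc2 : Real.sqrt (2 * (s:ℝ)) * (ε / Real.sqrt (1 - δ2s))
      ≤ Real.sqrt (2 * (s:ℝ) * (1 + δs)) / (1 - δ2s) * ε := by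
    set w := Real.sqrt (1 - δ2s) with hw
    have hsle : w ≤ Real.sqrt (1 + δs) := Real.sqrt_le_sqrt hδsl
    have hmul : Real.sqrt (2 * (s:ℝ) * (1 + δs))
        = Real.sqrt (2 * (s:ℝ)) * Real.sqrt (1 + δs) := Real.sqrt_mul (by positivity) _
    have e3 : ε / w = w * ε / (1 - δ2s) := by
      rw [← hdd2, pow_two, mul_div_mul_left _ _ (ne_of_gt hddpos)]
    rw [hmul, e3]
    have lhs_eq : Real.sqrt (2 * (s:ℝ)) * (w * ε / (1 - δ2s))
        = (Real.sqrt (2 * (s:ℝ)) * w * ε) / (1 - δ2s) := by ring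
    have rhs_eq : Real.sqrt (2 * (s:ℝ)) * Real.sqrt (1 + δs) / (1 - δ2s) * ε
        = (Real.sqrt (2 * (s:ℝ)) * Real.sqrt (1 + δs) * ε) / (1 - δ2s) := by ring
    rw [lhs_eq, rhs_eq]
    apply (div_le_div_iff_of_pos_right h1δ).mpr
    exact mul_le_mul_of_nonneg_right
      (mul_le_mul_of_nonneg_left hsle (Real.sqrt_nonneg _)) hε0
  -- final chain
  calc l1 d ≤ Real.sqrt (2 * (s:ℝ)) * l2 d := hstep1
    _ ≤ Real.sqrt (2 * (s:ℝ)) * (l2 v / (Real.sqrt (1 - δ2s) * Real.sqrt (1 + δ2s))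
        + ε / Real.sqrt (1 - δ2s)) :=
        mul_le_mul_of_nonneg_left hstep2 (Real.sqrt_nonneg _)
    _ = Real.sqrt (2 * (s:ℝ)) / (Real.sqrt (1 - δ2s) * Real.sqrt (1 + δ2s)) * l2 v
        + Real.sqrt (2 * (s:ℝ)) * (ε / Real.sqrt (1 - δ2s)) := by ring
    _ ≤ Real.sqrt (2 * s / (1 - δ2s ^ 2)) * l1 (x - xt)
        + Real.sqrt (2 * s * (1 + δs)) / (1 - δ2s) * ε := by
        have t1 : Real.sqrt (2 * (s:ℝ)) / (Real.sqrt (1 - δ2s) * Real.sqrt (1 + δ2s)) * l2 v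
            ≤ Real.sqrt (2 * (s:ℝ) / (1 - δ2s ^ 2)) * l1 (x - xt) := by
          rw [← hc1]
          exact mul_le_mul (le_refl _) hvb (l2_nonneg v) (by positivity)
        linarith [hc2]
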